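/- Let X be a finite-dimensional real Banach space and let T be a bounded linear operator on X whose norm attainment set satisfies M_T = D ∪ (−D), where D is a connected subset of the unit sphere of X. Then for any bounded linear operator A on X with T ⊥_B A (i.e., ‖T + λA‖ ≥ ‖T‖ in the operator norm for all real λ), there exists x ∈ D such that Tx ⊥_B Ax. -/

import Mathlib

open Metric Set

/-- Convexity of `t ↦ ‖u + t • v‖`: if the norm is `< c` at `t` and `≤ c` at `0`,
it is `< c` on `(0, t]`. -/
lemma conv_mono_aux {X : Type*} [NormedAddCommGroup X] [NormedSpace ℝ X]
    (u v : X) {s t c : ℝ} (hs : 0 < s) (hst : s ≤ t)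
    (hu : ‖u‖ ≤ c) (ht : ‖u + t • v‖ < c) : ‖u + s • v‖ < c := by
  have htpos : 0 < t := lt_of_lt_of_le hs hst
  set l : ℝ := s / t with hl
  have hl0 : 0 < l := div_pos hs htpos
  have hl1 : l ≤ 1 := (div_le_one htpos).2 hst
  have hid : u + s • v = (1 - l) • u + l • (u + t • v) := by
    have hlts : l * t = s := by rw [hl, div_mul_cancel₀ s htpos.ne']
    rw [smul_add, smul_smul, hlts]
    module
  calc ‖u + s • v‖ = ‖(1 - l) • u + l • (u + t • v)‖ := by rw [hid]
    _ ≤ ‖(1 - l) • u‖ + ‖l • (u + t • v)‖ := norm_add_le _ _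
    _ = (1 - l) * ‖u‖ + l * ‖u + t • v‖ := by
        rw [norm_smul, norm_smul, Real.norm_eq_abs, Real.norm_eq_abs,
          abs_of_nonneg (by linarith), abs_of_nonneg (le_of_lt hl0)]
    _ < (1 - l) * c + l * c := by nlinarith
    _ = c := by ring

/-- If `‖u + s•v‖ < ‖u‖` for some `s > 0` and `‖u - t•v‖ < ‖u‖` for some `t > 0`,
we get a contradiction (convexity). -/
lemma conv_mid_aux {X : Type*} [NormedAddCommGroup X] [NormedSpace ℝ X]
    (u v : X) {s t : ℝ} (hs : 0 < s) (ht : 0 < t)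
    (h1 : ‖u + s • v‖ < ‖u‖) (h2 : ‖u + (-t) • v‖ < ‖u‖) : False := by
  set l : ℝ := t / (s + t) with hl
  have hst : 0 < s + t := by linarith
  have hl0 : 0 < l := div_pos ht hst
  have hl1 : l < 1 := (div_lt_one hst).2 (by linarith)
  have hid : u = l • (u + s • v) + (1 - l) • (u + (-t) • v) := by
    have : l * s + (1 - l) * (-t) = 0 := by
      have hlst : l * (s + t) = t := by rw [hl, div_mul_cancel₀ t hst.ne']
      linear_combination hlst
    rw [smul_add, smul_add, smul_smul, smul_smul]
    have huu : u = l • u + (1 - l) • u := by module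
    calc u = (l • u + (1 - l) • u) + ((l * s) • v + ((1 - l) * -t) • v) := by
            rw [← huu, ← add_smul, this, zero_smul, add_zero]
      _ = l • u + (l * s) • v + ((1 - l) • u + ((1 - l) * -t) • v) := by abel
  have := calc ‖u‖ = ‖l • (u + s • v) + (1 - l) • (u + (-t) • v)‖ := by rw [← hid]
    _ ≤ ‖l • (u + s • v)‖ + ‖(1 - l) • (u + (-t) • v)‖ := norm_add_le _ _
    _ = l * ‖u + s • v‖ + (1 - l) * ‖u + (-t) • v‖ := by
        rw [norm_smul, norm_smul, Real.norm_eq_abs, Real.norm_eq_abs,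
          abs_of_nonneg (le_of_lt hl0), abs_of_nonneg (by linarith)]
    _ < l * ‖u‖ + (1 - l) * ‖u‖ := by nlinarith
    _ = ‖u‖ := by ring
  exact absurd this (lt_irrefl _)

/-- Norm attainment for operators on a finite-dimensional space with nonempty sphere. -/
lemma attain_aux {X : Type*} [NormedAddCommGroup X] [NormedSpace ℝ X]
    [FiniteDimensional ℝ X] (S : X →L[ℝ] X)
    (hne : (Metric.sphere (0 : X) 1).Nonempty) :
    ∃ x : X, ‖x‖ = 1 ∧ ‖S x‖ = ‖S‖ := by
  have hcomp : IsCompact (Metric.sphere (0 : X) 1) := isCompact_sphere 0 1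
  obtain ⟨x0, hx0, hmax⟩ := hcomp.exists_isMaxOn hne (S.continuous.norm.continuousOn)
  have hx0n : ‖x0‖ = 1 := by simpa using hx0
  refine ⟨x0, hx0n, le_antisymm ?_ ?_⟩
  · calc ‖S x0‖ ≤ ‖S‖ * ‖x0‖ := S.le_opNorm x0
      _ = ‖S‖ := by rw [hx0n, mul_one]
  · refine ContinuousLinearMap.opNorm_le_of_unit_norm (norm_nonneg _) fun x hx => ?_
    exact hmax (by simpa using hx)

/-- Key lemma: if every norm-attaining unit vector has a positive direction where the
norm strictly decreases, we contradict `T ⊥_B A`. -/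
lemma key_aux {X : Type*} [NormedAddCommGroup X] [NormedSpace ℝ X]
    [FiniteDimensional ℝ X] (T A : X →L[ℝ] X)
    (hne : (Metric.sphere (0 : X) 1).Nonempty)
    (hTA : ∀ t : ℝ, ‖T‖ ≤ ‖T + t • A‖)
    (hpt : ∀ y : X, ‖y‖ = 1 → ‖T y‖ = ‖T‖ → ∃ t : ℝ, 0 < t ∧ ‖T y + t • A y‖ < ‖T‖) :
    False := by
  -- per-point claim for all unit vectors
  have hall : ∀ y : X, ‖y‖ = 1 → ∃ t : ℝ, 0 < t ∧ ‖T y + t • A y‖ < ‖T‖ := by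
    intro y hy
    by_cases hcase : ‖T y‖ = ‖T‖
    · exact hpt y hy hcase
    · have hle : ‖T y‖ ≤ ‖T‖ := by
        calc ‖T y‖ ≤ ‖T‖ * ‖y‖ := T.le_opNorm y
          _ = ‖T‖ := by rw [hy, mul_one]
      have hlt : ‖T y‖ < ‖T‖ := lt_of_le_of_ne hle hcase
      have hgap : 0 < (‖T‖ - ‖T y‖) / (2 * (‖A‖ + 1)) :=
        div_pos (by linarith) (by positivity)
      refine ⟨(‖T‖ - ‖T y‖) / (2 * (‖A‖ + 1)), hgap, ?_⟩
      have hAy : ‖A y‖ ≤ ‖A‖ := by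
        calc ‖A y‖ ≤ ‖A‖ * ‖y‖ := A.le_opNorm y
          _ = ‖A‖ := by rw [hy, mul_one]
      have h1 : ‖T y + ((‖T‖ - ‖T y‖) / (2 * (‖A‖ + 1))) • A y‖
          ≤ ‖T y‖ + ((‖T‖ - ‖T y‖) / (2 * (‖A‖ + 1))) * ‖A y‖ := by
        calc ‖T y + ((‖T‖ - ‖T y‖) / (2 * (‖A‖ + 1))) • A y‖
            ≤ ‖T y‖ + ‖((‖T‖ - ‖T y‖) / (2 * (‖A‖ + 1))) • A y‖ := norm_add_le _ _
          _ = ‖T y‖ + ((‖T‖ - ‖T y‖) / (2 * (‖A‖ + 1))) * ‖A y‖ := by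
              rw [norm_smul, Real.norm_eq_abs, abs_of_nonneg (le_of_lt hgap)]
      have hA0 : (0:ℝ) ≤ ‖A‖ := norm_nonneg _
      have hAy0 : (0:ℝ) ≤ ‖A y‖ := norm_nonneg _
      have h2 : ((‖T‖ - ‖T y‖) / (2 * (‖A‖ + 1))) * ‖A y‖ < ‖T‖ - ‖T y‖ := by
        rw [div_mul_eq_mul_div, div_lt_iff₀ (by positivity)]
        nlinarith
      linarith
  -- open cover of the sphere
  set V : {t : ℝ // 0 < t} → Set X := fun i => {y : X | ‖T y + i.1 • A y‖ < ‖T‖} with hV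
  have hVopen : ∀ i, IsOpen (V i) := by
    intro i
    exact isOpen_lt (by fun_prop) continuous_const
  have hcover : Metric.sphere (0 : X) 1 ⊆ ⋃ i, V i := by
    intro y hy
    obtain ⟨t, ht0, hty⟩ := hall y (by simpa using hy)
    exact Set.mem_iUnion.2 ⟨⟨t, ht0⟩, hty⟩
  obtain ⟨F, hF⟩ := (isCompact_sphere (0 : X) 1).elim_finite_subcover V hVopen hcover
  obtain ⟨x0, hx0⟩ := id hne
  have hFne : F.Nonempty := by
    rcases Set.mem_iUnion₂.1 (hF hx0) with ⟨i, hiF, _⟩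
    exact ⟨i, hiF⟩
  set t0 : ℝ := F.inf' hFne (fun i => i.1) with ht0def
  have ht0pos : 0 < t0 := by
    rw [ht0def, Finset.lt_inf'_iff]
    exact fun i _ => i.2
  -- uniform strict decrease on the sphere
  have huniform : ∀ y : X, ‖y‖ = 1 → ‖T y + t0 • A y‖ < ‖T‖ := by
    intro y hy
    rcases Set.mem_iUnion₂.1 (hF (by simpa using hy)) with ⟨i, hiF, hyV⟩
    have hle : t0 ≤ i.1 := Finset.inf'_le _ hiF
    have hTy : ‖T y‖ ≤ ‖T‖ := by
      calc ‖T y‖ ≤ ‖T‖ * ‖y‖ := T.le_opNorm y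
        _ = ‖T‖ := by rw [hy, mul_one]
    exact conv_mono_aux (T y) (A y) ht0pos hle hTy hyV
  -- contradiction via norm attainment of T + t0 • A
  obtain ⟨z, hz1, hz2⟩ := attain_aux (T + t0 • A) hne
  have : ‖(T + t0 • A) z‖ < ‖T‖ := by
    have : (T + t0 • A) z = T z + t0 • A z := by simp
    rw [this]
    exact huniform z hz1
  have h1 := hTA t0
  rw [← hz2] at h1
  linarith

theorem birkhoff_orthogonality_operators_of_connected_attainment
    {X : Type*} [NormedAddCommGroup X] [NormedSpace ℝ X]
    [CompleteSpace X] [FiniteDimensional ℝ X]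
    (T : X →L[ℝ] X) (D : Set X)
    (hDsphere : D ⊆ Metric.sphere (0 : X) 1) (hDconn : IsConnected D)
    (hM : {x : X | ‖x‖ = 1 ∧ ‖T x‖ = ‖T‖} = D ∪ (-D))
    (A : X →L[ℝ] X) (hTA : ∀ t : ℝ, ‖T‖ ≤ ‖T + t • A‖) :
    ∃ x ∈ D, ∀ t : ℝ, ‖T x‖ ≤ ‖T x + t • A x‖ := by
  by_contra hcon
  push_neg at hcon
  -- sphere is nonempty
  obtain ⟨x0, hx0D⟩ := hDconn.nonempty
  have hne : (Metric.sphere (0 : X) 1).Nonempty := ⟨x0, hDsphere hx0D⟩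
  -- the two open sets
  set U : Set X := {x : X | ∃ t : ℝ, 0 < t ∧ ‖T x + t • A x‖ < ‖T x‖} with hU
  set W : Set X := {x : X | ∃ t : ℝ, 0 < t ∧ ‖T x + (-t) • A x‖ < ‖T x‖} with hW
  have hUopen : IsOpen U := by
    have : U = ⋃ i : {t : ℝ // 0 < t}, {x : X | ‖T x + i.1 • A x‖ < ‖T x‖} := by
      ext x
      simp only [hU, Set.mem_setOf_eq, Set.mem_iUnion]
      exact ⟨fun ⟨t, ht, h⟩ => ⟨⟨t, ht⟩, h⟩, fun ⟨⟨t, ht⟩, h⟩ => ⟨t, ht, h⟩⟩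
    rw [this]
    exact isOpen_iUnion fun i => isOpen_lt (by fun_prop) (by fun_prop)
  have hWopen : IsOpen W := by
    have : W = ⋃ i : {t : ℝ // 0 < t}, {x : X | ‖T x + (-i.1) • A x‖ < ‖T x‖} := by
      ext x
      simp only [hW, Set.mem_setOf_eq, Set.mem_iUnion]
      exact ⟨fun ⟨t, ht, h⟩ => ⟨⟨t, ht⟩, h⟩, fun ⟨⟨t, ht⟩, h⟩ => ⟨t, ht, h⟩⟩
    rw [this]
    exact isOpen_iUnion fun i => isOpen_lt (by fun_prop) (by fun_prop)
  have hdisj : Disjoint U W := by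
    rw [Set.disjoint_left]
    rintro x ⟨s, hs, h1⟩ ⟨t, ht, h2⟩
    exact conv_mid_aux (T x) (A x) hs ht h1 h2
  have hDsub : D ⊆ U ∪ W := by
    intro x hxD
    obtain ⟨t, ht⟩ := hcon x hxD
    have htne : t ≠ 0 := by
      intro h
      rw [h] at ht
      simp at ht
    rcases lt_or_gt_of_ne htne with hneg | hpos
    · right
      exact ⟨-t, by linarith, by rwa [neg_neg]⟩
    · left
      exact ⟨t, hpos, ht⟩
  have hMeq : ∀ y : X, ‖y‖ = 1 → ‖T y‖ = ‖T‖ → y ∈ D ∪ (-D) := by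
    intro y h1 h2
    rw [← hM]
    exact ⟨h1, h2⟩
  rcases hDconn.isPreconnected.subset_or_subset hUopen hWopen hdisj hDsub with hsub | hsub
  · -- D ⊆ U: use key_aux with A
    refine key_aux T A hne hTA ?_
    intro y hy hTy
    rcases hMeq y hy hTy with hyD | hyD
    · obtain ⟨t, ht, h⟩ := hsub hyD
      exact ⟨t, ht, by rwa [hTy] at h⟩
    · have hnyD : -y ∈ D := by simpa using hyD
      obtain ⟨t, ht, h⟩ := hsub hnyD
      refine ⟨t, ht, ?_⟩
      have he : T (-y) + t • A (-y) = -(T y + t • A y) := by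
        rw [map_neg, map_neg]
        module
      rw [he, norm_neg, map_neg, norm_neg, hTy] at h
      exact h
  · -- D ⊆ W: use key_aux with -A
    have hTA' : ∀ t : ℝ, ‖T‖ ≤ ‖T + t • (-A)‖ := by
      intro t
      have : T + t • (-A) = T + (-t) • A := by module
      rw [this]
      exact hTA (-t)
    refine key_aux T (-A) hne hTA' ?_
    intro y hy hTy
    rcases hMeq y hy hTy with hyD | hyD
    · obtain ⟨t, ht, h⟩ := hsub hyD
      refine ⟨t, ht, ?_⟩
      have he : T y + t • (-A) y = T y + (-t) • A y := by
        simp only [ContinuousLinearMap.neg_apply]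
        module
      rw [he]
      rwa [hTy] at h
    · have hnyD : -y ∈ D := by simpa using hyD
      obtain ⟨t, ht, h⟩ := hsub hnyD
      refine ⟨t, ht, ?_⟩
      have he : T y + t • (-A) y = -(T (-y) + (-t) • A (-y)) := by
        simp only [ContinuousLinearMap.neg_apply, map_neg]
        module
      have hR : ‖T (-y)‖ = ‖T‖ := by rw [map_neg, norm_neg, hTy]
      rw [hR] at h
      rw [he, norm_neg]
      exact h
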